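/- One step of the Burnside process from the longest element samples the Mallows measure: let w₀ ∈ S_n be the permutation w₀(i) = n+1−i, and let P be the Burnside kernel for the left-multiplication action of U on X = G/B. Then for every σ ∈ S_n, Σ_{y ∈ C_σ} P(M_{w₀}·B, y) = q^{ℓ(σ)} / |G/B|, where C_σ = {u·M_σ·B : u ∈ U} ⊆ G/B is the Bruhat cell of σ. -/

import Mathlib

/-- `u` is a unipotent upper triangular matrix (upper triangular with all
diagonal entries equal to `1`), i.e. `u` lies in `U`. -/
def IsUnipUpper {n : ℕ} {F : Type*} [Field F] (u : Matrix (Fin n) (Fin n) F) : Prop :=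
  (∀ i j : Fin n, j < i → u i j = 0) ∧ ∀ i : Fin n, u i i = 1

/-- `b` is an invertible upper triangular matrix (upper triangular with all
diagonal entries nonzero), i.e. `b` lies in the Borel subgroup `B`. -/
def IsInvUpper {n : ℕ} {F : Type*} [Field F] (b : Matrix (Fin n) (Fin n) F) : Prop :=
  (∀ i j : Fin n, j < i → b i j = 0) ∧ ∀ i : Fin n, b i i ≠ 0

/-- The permutation matrix `M_σ` with `(M_σ)_{ij} = 1` if `j = σ(i)` and `0` otherwise. -/
def permMat (n : ℕ) (F : Type*) [Field F] (σ : Equiv.Perm (Fin n)) :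
    Matrix (Fin n) (Fin n) F :=
  Matrix.of fun i j => if σ i = j then 1 else 0

/-- The number of inversions `ℓ(σ) = |{(i,j) : i < j, σ(i) > σ(j)}|`. -/
def lenPerm {n : ℕ} (σ : Equiv.Perm (Fin n)) : ℕ :=
  (Finset.univ.filter fun p : Fin n × Fin n => p.1 < p.2 ∧ σ p.2 < σ p.1).card

/-- The left coset `g·B` of the Borel subgroup `B`, as a set of matrices. -/
def cosetOf {n : ℕ} {F : Type*} [Field F] (g : Matrix (Fin n) (Fin n) F) :
    Set (Matrix (Fin n) (Fin n) F) :=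
  {x | ∃ b : Matrix (Fin n) (Fin n) F, IsInvUpper b ∧ x = g * b}

/-- The flag space `X = G/B`: the set of left cosets `g·B` with `g ∈ GL_n(F)`,
each realized as a subset of the matrix algebra. -/
def flagSpace (n : ℕ) (F : Type*) [Field F] : Set (Set (Matrix (Fin n) (Fin n) F)) :=
  {S | ∃ g : Matrix (Fin n) (Fin n) F, IsUnit g.det ∧ S = cosetOf g}

/-- The stabilizer `stab_U(S) = {u ∈ U : u·S = S}` of a coset `S ∈ G/B` for the
left-multiplication action of `U` on `G/B`. -/
def stabU {n : ℕ} {F : Type*} [Field F] (S : Set (Matrix (Fin n) (Fin n) F)) :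
    Set (Matrix (Fin n) (Fin n) F) :=
  {u | IsUnipUpper u ∧ (fun x => u * x) '' S = S}

/-- The fixed-point set `Fix_X(u) = {S ∈ X : u·S = S}` of `u` acting on
`X = G/B` by left multiplication. -/
def fixFlags {n : ℕ} {F : Type*} [Field F] (u : Matrix (Fin n) (Fin n) F) :
    Set (Set (Matrix (Fin n) (Fin n) F)) :=
  {S | S ∈ flagSpace n F ∧ (fun x => u * x) '' S = S}

/-- The Burnside kernel
`P(x,y) = (1/|stab_U(x)|) · Σ_{u ∈ stab_U(x) ∩ stab_U(y)} 1/|Fix_X(u)|`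
for the left-multiplication action of `U` on `X = G/B`. -/
noncomputable def burnsideFlagKernel {n : ℕ} {F : Type*} [Field F]
    (S T : Set (Matrix (Fin n) (Fin n) F)) : ℝ :=
  (Nat.card ↥(stabU S) : ℝ)⁻¹ *
    ∑ᶠ u ∈ stabU S ∩ stabU T, (Nat.card ↥(fixFlags u) : ℝ)⁻¹

section Lemmas
variable {n : ℕ} {F : Type*} [Field F]

lemma triangular_mul_lower {u v : Matrix (Fin n) (Fin n) F}
    (hu : ∀ i j : Fin n, j < i → u i j = 0) (hv : ∀ i j : Fin n, j < i → v i j = 0)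
    (i j : Fin n) (hij : j < i) : (u * v) i j = 0 := by
  rw [Matrix.mul_apply]
  refine Finset.sum_eq_zero fun k _ => ?_
  rcases lt_or_ge k i with hk | hk
  · rw [hu i k hk, zero_mul]
  · rw [hv k j (lt_of_lt_of_le hij hk), mul_zero]

lemma triangular_mul_diag {u v : Matrix (Fin n) (Fin n) F}
    (hu : ∀ i j : Fin n, j < i → u i j = 0) (hv : ∀ i j : Fin n, j < i → v i j = 0)
    (i : Fin n) : (u * v) i i = u i i * v i i := by
  rw [Matrix.mul_apply]
  refine Finset.sum_eq_single i (fun k _ hk => ?_) (by simp)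
  rcases lt_or_gt_of_ne hk with h | h
  · rw [hu i k h, zero_mul]
  · rw [hv k i h, mul_zero]

lemma IsUnipUpper.one : IsUnipUpper (1 : Matrix (Fin n) (Fin n) F) :=
  ⟨fun _ j h => Matrix.one_apply_ne h.ne', fun i => Matrix.one_apply_eq i⟩

lemma IsInvUpper.one : IsInvUpper (1 : Matrix (Fin n) (Fin n) F) :=
  ⟨fun _ j h => Matrix.one_apply_ne h.ne', fun i => by simp⟩

lemma IsUnipUpper.mul {u v : Matrix (Fin n) (Fin n) F} (hu : IsUnipUpper u)
    (hv : IsUnipUpper v) : IsUnipUpper (u * v) :=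
  ⟨triangular_mul_lower hu.1 hv.1, fun i => by
    rw [triangular_mul_diag hu.1 hv.1, hu.2, hv.2, one_mul]⟩

lemma IsInvUpper.mul {u v : Matrix (Fin n) (Fin n) F} (hu : IsInvUpper u)
    (hv : IsInvUpper v) : IsInvUpper (u * v) :=
  ⟨triangular_mul_lower hu.1 hv.1, fun i => by
    rw [triangular_mul_diag hu.1 hv.1]; exact mul_ne_zero (hu.2 i) (hv.2 i)⟩

lemma IsUnipUpper.isInvUpper {u : Matrix (Fin n) (Fin n) F} (hu : IsUnipUpper u) :
    IsInvUpper u := ⟨hu.1, fun i => by rw [hu.2]; exact one_ne_zero⟩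

lemma IsInvUpper.blockTriangular {b : Matrix (Fin n) (Fin n) F} (hb : IsInvUpper b) :
    b.BlockTriangular id := fun i j h => hb.1 i j h

lemma IsInvUpper.isUnit_det {b : Matrix (Fin n) (Fin n) F} (hb : IsInvUpper b) :
    IsUnit b.det := by
  rw [Matrix.det_of_upperTriangular hb.blockTriangular]
  exact (Finset.prod_ne_zero_iff.2 fun i _ => hb.2 i).isUnit

lemma IsInvUpper.inv {b : Matrix (Fin n) (Fin n) F} (hb : IsInvUpper b) :
    IsInvUpper b⁻¹ := by
  haveI := b.invertibleOfIsUnitDet hb.isUnit_det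
  have hlow : ∀ i j : Fin n, j < i → b⁻¹ i j = 0 :=
    fun i j h => Matrix.blockTriangular_inv_of_blockTriangular hb.blockTriangular h
  refine ⟨hlow, fun i => ?_⟩
  have h1 : (b * b⁻¹) i i = 1 := by rw [Matrix.mul_nonsing_inv b hb.isUnit_det]; simp
  rw [triangular_mul_diag hb.1 hlow] at h1
  intro h0
  rw [h0, mul_zero] at h1
  exact zero_ne_one h1

lemma IsUnipUpper.inv {u : Matrix (Fin n) (Fin n) F} (hu : IsUnipUpper u) :
    IsUnipUpper u⁻¹ := by
  refine ⟨hu.isInvUpper.inv.1, fun i => ?_⟩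
  have h1 : (u * u⁻¹) i i = 1 := by
    rw [Matrix.mul_nonsing_inv u hu.isInvUpper.isUnit_det]; simp
  rw [triangular_mul_diag hu.1 hu.isInvUpper.inv.1, hu.2, one_mul] at h1
  exact h1

lemma image_mul_cosetOf (a g : Matrix (Fin n) (Fin n) F) :
    (fun x => a * x) '' cosetOf g = cosetOf (a * g) := by
  ext x
  constructor
  · rintro ⟨y, ⟨b, hb, rfl⟩, rfl⟩
    exact ⟨b, hb, (mul_assoc a g b).symm⟩
  · rintro ⟨b, hb, rfl⟩
    exact ⟨g * b, ⟨b, hb, rfl⟩, (mul_assoc a g b).symm⟩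

lemma cosetOf_mul_right (g b : Matrix (Fin n) (Fin n) F) (hb : IsInvUpper b) :
    cosetOf (g * b) = cosetOf g := by
  ext x
  constructor
  · rintro ⟨b', hb', rfl⟩
    exact ⟨b * b', hb.mul hb', mul_assoc g b b'⟩
  · rintro ⟨b', hb', rfl⟩
    refine ⟨b⁻¹ * b', hb.inv.mul hb', ?_⟩
    rw [← mul_assoc, mul_assoc g, Matrix.mul_nonsing_inv _ hb.isUnit_det, mul_one]

lemma self_mem_cosetOf (g : Matrix (Fin n) (Fin n) F) : g ∈ cosetOf g :=
  ⟨1, IsInvUpper.one, (mul_one g).symm⟩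

lemma cosetOf_eq_iff (g g' : Matrix (Fin n) (Fin n) F) :
    cosetOf g = cosetOf g' ↔ ∃ b, IsInvUpper b ∧ g' = g * b := by
  constructor
  · intro h
    have : g' ∈ cosetOf g := h ▸ self_mem_cosetOf g'
    exact this
  · rintro ⟨b, hb, rfl⟩
    exact (cosetOf_mul_right g b hb).symm

lemma permMat_mul_apply (σ : Equiv.Perm (Fin n)) (v : Matrix (Fin n) (Fin n) F)
    (i j : Fin n) : (permMat n F σ * v) i j = v (σ i) j := by
  rw [Matrix.mul_apply]
  simp only [permMat, Matrix.of_apply, ite_mul, one_mul, zero_mul]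
  rw [Finset.sum_ite_eq]
  simp

lemma mul_permMat_apply (σ : Equiv.Perm (Fin n)) (v : Matrix (Fin n) (Fin n) F)
    (i j : Fin n) : (v * permMat n F σ) i j = v i (σ⁻¹ j) := by
  rw [Matrix.mul_apply]
  simp only [permMat, Matrix.of_apply, mul_ite, mul_one, mul_zero]
  have : ∀ k : Fin n, (σ k = j) = (k = σ⁻¹ j) := by
    intro k
    simp [Equiv.apply_eq_iff_eq_symm_apply, Equiv.Perm.inv_def]
  simp only [this]
  rw [Finset.sum_ite_eq']
  simp

lemma permMat_inv_mul (σ : Equiv.Perm (Fin n)) :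
    permMat n F σ⁻¹ * permMat n F σ = 1 := by
  ext i j
  rw [permMat_mul_apply]
  simp [permMat, Matrix.one_apply]

lemma permMat_mul_inv (σ : Equiv.Perm (Fin n)) :
    permMat n F σ * permMat n F σ⁻¹ = 1 := by
  have := permMat_inv_mul (n := n) (F := F) σ⁻¹
  rwa [inv_inv] at this

lemma permMat_isUnit_det (σ : Equiv.Perm (Fin n)) :
    IsUnit (permMat n F σ).det :=
  Matrix.isUnit_det_of_left_inverse (permMat_inv_mul σ)

lemma permMat_inv (σ : Equiv.Perm (Fin n)) :
    (permMat n F σ)⁻¹ = permMat n F σ⁻¹ :=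
  Matrix.inv_eq_left_inv (permMat_inv_mul σ)

lemma conj_permMat_apply (σ : Equiv.Perm (Fin n)) (u : Matrix (Fin n) (Fin n) F)
    (a b : Fin n) :
    (permMat n F σ⁻¹ * u * permMat n F σ) a b = u (σ⁻¹ a) (σ⁻¹ b) := by
  rw [mul_permMat_apply, permMat_mul_apply]

/-- Characterization of membership in the stabilizer of the coset of a
permutation matrix. -/
lemma image_eq_coset_permMat_iff (σ : Equiv.Perm (Fin n))
    (u : Matrix (Fin n) (Fin n) F) (hu : IsUnipUpper u) :
    (fun x => u * x) '' cosetOf (permMat n F σ) = cosetOf (permMat n F σ) ↔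
      ∀ i j : Fin n, σ j < σ i → u i j = 0 := by
  rw [image_mul_cosetOf]
  rw [show cosetOf (u * permMat n F σ) = cosetOf (permMat n F σ) ↔
      cosetOf (permMat n F σ) = cosetOf (u * permMat n F σ) from eq_comm]
  rw [cosetOf_eq_iff]
  constructor
  · rintro ⟨b, hb, hb2⟩ i j hij
    have hbval : b = permMat n F σ⁻¹ * u * permMat n F σ := by
      rw [mul_assoc, hb2, ← mul_assoc, permMat_inv_mul, one_mul]
    have := hb.1 (σ i) (σ j) hij
    rw [hbval, conj_permMat_apply] at this
    simpa using this
  · intro h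
    refine ⟨permMat n F σ⁻¹ * u * permMat n F σ, ⟨?_, ?_⟩, ?_⟩
    · intro a b hab
      rw [conj_permMat_apply]
      apply h
      simpa using hab
    · intro a
      rw [conj_permMat_apply, hu.2]
      exact one_ne_zero
    · rw [← mul_assoc, ← mul_assoc, permMat_mul_inv, one_mul]

end Lemmas

section Part2
variable {n : ℕ} {F : Type*} [Field F]

lemma image_one_mul (S : Set (Matrix (Fin n) (Fin n) F)) :
    (fun x => (1 : Matrix (Fin n) (Fin n) F) * x) '' S = S := by
  have h : (fun x => (1 : Matrix (Fin n) (Fin n) F) * x) = id := by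
    funext x; simp
  rw [h, Set.image_id]

lemma stabU_w0 :
    stabU (cosetOf (permMat n F Fin.revPerm)) = {(1 : Matrix (Fin n) (Fin n) F)} := by
  ext u
  simp only [stabU, Set.mem_setOf_eq, Set.mem_singleton_iff]
  constructor
  · rintro ⟨hu, himg⟩
    have hcond := (image_eq_coset_permMat_iff Fin.revPerm u hu).1 himg
    ext i j
    rcases lt_trichotomy i j with h | h | h
    · have h0 : u i j = 0 := hcond i j (by simpa [Fin.rev_lt_rev] using h)
      rw [h0, Matrix.one_apply_ne h.ne]
    · subst h; rw [hu.2, Matrix.one_apply_eq]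
    · rw [hu.1 i j h, Matrix.one_apply_ne h.ne']
  · rintro rfl
    exact ⟨IsUnipUpper.one, image_one_mul _⟩

lemma fixFlags_one : fixFlags (1 : Matrix (Fin n) (Fin n) F) = flagSpace n F := by
  ext S
  simp [fixFlags, image_one_mul]

lemma kernel_const (T : Set (Matrix (Fin n) (Fin n) F)) :
    burnsideFlagKernel (cosetOf (permMat n F Fin.revPerm)) T =
      (Nat.card ↥(flagSpace n F) : ℝ)⁻¹ := by
  unfold burnsideFlagKernel
  rw [stabU_w0]
  have hone : (1 : Matrix (Fin n) (Fin n) F) ∈ stabU T :=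
    ⟨IsUnipUpper.one, image_one_mul T⟩
  have hint : ({(1 : Matrix (Fin n) (Fin n) F)} : Set _) ∩ stabU T = {1} :=
    Set.inter_eq_left.2 (Set.singleton_subset_iff.2 hone)
  rw [hint, finsum_mem_singleton, fixFlags_one]
  have h1 : Nat.card ↥({(1 : Matrix (Fin n) (Fin n) F)} : Set _) = 1 := by simp
  rw [h1]
  simp

end Part2

section Part3
open Pointwise
variable {n : ℕ} {F : Type*} [Field F]

/-- Matrices that are unipotent upper triangular, with free entries allowed only
at positions in `P` (all other strictly-upper entries vanish). -/
def matSet (n : ℕ) (F : Type*) [Field F] (P : Finset (Fin n × Fin n)) :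
    Set (Matrix (Fin n) (Fin n) F) :=
  {u | IsUnipUpper u ∧ ∀ i j : Fin n, i < j → (i, j) ∉ P → u i j = 0}

noncomputable def matSetEquiv (P : Finset (Fin n × Fin n))
    (hP : ∀ p ∈ P, p.1 < p.2) : ↥(matSet n F P) ≃ (↥P → F) where
  toFun u := fun p => u.1 p.1.1 p.1.2
  invFun f := ⟨Matrix.of fun i j =>
      if h : (i, j) ∈ P then f ⟨(i, j), h⟩ else if i = j then 1 else 0, by
    constructor
    · constructor
      · intro i j hji
        have hnot : (i, j) ∉ P := fun h => absurd (hP _ h) (by simp [not_lt, hji.le])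
        simp [Matrix.of_apply, hnot, (ne_of_gt hji)]
      · intro i
        have hnot : (i, i) ∉ P := fun h => absurd (hP _ h) (by simp)
        simp [Matrix.of_apply, hnot]
    · intro i j hij hnot
      simp [Matrix.of_apply, hnot, hij.ne]⟩
  left_inv := by
    rintro ⟨u, hu, hcond⟩
    apply Subtype.ext
    ext i j
    simp only [Matrix.of_apply]
    by_cases h : (i, j) ∈ P
    · simp [h]
    · rcases lt_trichotomy i j with hlt | heq | hgt
      · simp [h, hlt.ne, hcond i j hlt h]
      · subst heq; simp [h, hu.2 i]
      · simp [h, hgt.ne', hu.1 i j hgt]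
  right_inv := by
    intro f
    funext p
    obtain ⟨⟨i, j⟩, hp⟩ := p
    simp only [Matrix.of_apply]
    exact dif_pos hp

lemma card_matSet [Fintype F] (P : Finset (Fin n × Fin n))
    (hP : ∀ p ∈ P, p.1 < p.2) :
    Nat.card ↥(matSet n F P) = Fintype.card F ^ P.card := by
  rw [Nat.card_congr (matSetEquiv P hP), Nat.card_eq_fintype_card,
    Fintype.card_fun, Fintype.card_coe]

/-- The unipotent upper triangular subgroup of the units of the matrix ring. -/
def UU (n : ℕ) (F : Type*) [Field F] : Subgroup (Matrix (Fin n) (Fin n) F)ˣ where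
  carrier := {u | IsUnipUpper (u : Matrix (Fin n) (Fin n) F)}
  mul_mem' := fun ha hb => ha.mul hb
  one_mem' := IsUnipUpper.one
  inv_mem' := by
    intro u hu
    show IsUnipUpper ((u⁻¹ : (Matrix (Fin n) (Fin n) F)ˣ) : Matrix (Fin n) (Fin n) F)
    rw [Matrix.coe_units_inv]
    exact IsUnipUpper.inv hu

lemma unip_isUnit {u : Matrix (Fin n) (Fin n) F} (hu : IsUnipUpper u) : IsUnit u :=
  (Matrix.isUnit_iff_isUnit_det u).2 hu.isInvUpper.isUnit_det

lemma card_UU [Fintype F] :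
    Nat.card (UU n F) =
      Nat.card ↥(matSet n F (Finset.univ.filter fun p : Fin n × Fin n => p.1 < p.2)) := by
  apply Nat.card_eq_of_bijective
    (fun u : UU n F => (⟨(u.1 : Matrix (Fin n) (Fin n) F), u.2, by
      intro i j hij hnot
      exact absurd (by simp [hij]) hnot⟩ : ↥(matSet n F _)))
  constructor
  · intro a b hab
    exact Subtype.ext (Units.ext (congrArg Subtype.val hab))
  · rintro ⟨m, hm, _⟩
    exact ⟨⟨(unip_isUnit hm).unit, by exact hm⟩, by simp⟩

-- the coset of the permutation matrix, as the base point
lemma smul_set_eq_image (a : (Matrix (Fin n) (Fin n) F)ˣ)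
    (S : Set (Matrix (Fin n) (Fin n) F)) :
    a • S = (fun x => (a : Matrix (Fin n) (Fin n) F) * x) '' S := by
  rw [← Set.image_smul]
  rfl

lemma orbit_eq_cell (σ : Equiv.Perm (Fin n)) :
    MulAction.orbit (UU n F) (cosetOf (permMat n F σ)) =
      {S : Set (Matrix (Fin n) (Fin n) F) |
        ∃ u : Matrix (Fin n) (Fin n) F, IsUnipUpper u ∧ S = cosetOf (u * permMat n F σ)} := by
  ext S
  constructor
  · rintro ⟨⟨g, hg⟩, rfl⟩
    refine ⟨(g : Matrix (Fin n) (Fin n) F), hg, ?_⟩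
    show (⟨g, hg⟩ : UU n F) • _ = _
    rw [Subgroup.smul_def, smul_set_eq_image, image_mul_cosetOf]
  · rintro ⟨u, hu, rfl⟩
    refine ⟨⟨(unip_isUnit hu).unit, by exact hu⟩, ?_⟩
    show (⟨(unip_isUnit hu).unit, by exact hu⟩ : UU n F) • _ = _
    rw [Subgroup.smul_def, smul_set_eq_image, image_mul_cosetOf]
    simp

lemma card_stab (σ : Equiv.Perm (Fin n)) [Fintype F] :
    Nat.card (MulAction.stabilizer (UU n F) (cosetOf (permMat n F σ))) =
      Nat.card ↥(matSet n F (Finset.univ.filter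
        fun p : Fin n × Fin n => p.1 < p.2 ∧ σ p.1 < σ p.2)) := by
  have key : ∀ u : Matrix (Fin n) (Fin n) F, IsUnipUpper u →
      (((fun x => u * x) '' cosetOf (permMat n F σ) = cosetOf (permMat n F σ)) ↔
        u ∈ matSet n F (Finset.univ.filter
          fun p : Fin n × Fin n => p.1 < p.2 ∧ σ p.1 < σ p.2)) := by
    intro u hu
    rw [image_eq_coset_permMat_iff σ u hu]
    constructor
    · intro h
      refine ⟨hu, fun i j hij hnot => ?_⟩
      have : ¬ (σ i < σ j) := fun hσ => hnot (by simp [hij, hσ])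
      have hne : σ i ≠ σ j := fun he => hij.ne (σ.injective he)
      exact h i j (lt_of_le_of_ne (not_lt.1 this) hne.symm)
    · rintro ⟨_, hcond⟩ i j hσ
      rcases lt_trichotomy i j with hlt | heq | hgt
      · exact hcond i j hlt (by simp [not_lt.2 hσ.le])
      · exact absurd (heq ▸ hσ) (lt_irrefl _)
      · exact hu.1 i j hgt
  apply Nat.card_eq_of_bijective
    (fun g : MulAction.stabilizer (UU n F) (cosetOf (permMat n F σ)) =>
      (⟨(g.1.1 : Matrix (Fin n) (Fin n) F),
      (key _ g.1.2).1 (by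
        have hg := g.2
        rw [MulAction.mem_stabilizer_iff] at hg
        rw [← smul_set_eq_image, ← Subgroup.smul_def]
        exact hg)⟩ : ↥(matSet n F _)))
  constructor
  · intro a b hab
    exact Subtype.ext (Subtype.ext (Units.ext (congrArg Subtype.val hab)))
  · rintro ⟨m, hm⟩
    refine ⟨⟨⟨(unip_isUnit hm.1).unit, by exact hm.1⟩, ?_⟩, by simp⟩
    rw [MulAction.mem_stabilizer_iff, Subgroup.smul_def, smul_set_eq_image]
    exact (key _ (by simpa using hm.1)).2 (by simpa using hm)

end Part3

section Part4
open Pointwise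
variable {n : ℕ} {F : Type*} [Field F]

lemma filter_card_split (σ : Equiv.Perm (Fin n)) :
    (Finset.univ.filter fun p : Fin n × Fin n => p.1 < p.2 ∧ σ p.1 < σ p.2).card
      + lenPerm σ
      = (Finset.univ.filter fun p : Fin n × Fin n => p.1 < p.2).card := by
  classical
  have h1 : (Finset.univ.filter fun p : Fin n × Fin n => p.1 < p.2).filter
      (fun p => σ p.1 < σ p.2) =
      Finset.univ.filter fun p : Fin n × Fin n => p.1 < p.2 ∧ σ p.1 < σ p.2 := by
    rw [Finset.filter_filter]
  have h2 : (Finset.univ.filter fun p : Fin n × Fin n => p.1 < p.2).filter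
      (fun p => ¬ σ p.1 < σ p.2) =
      Finset.univ.filter fun p : Fin n × Fin n => p.1 < p.2 ∧ σ p.2 < σ p.1 := by
    rw [Finset.filter_filter]
    apply Finset.filter_congr
    intro p _
    constructor
    · rintro ⟨h, hn⟩
      refine ⟨h, lt_of_le_of_ne (not_lt.1 hn) fun he => h.ne (σ.injective he.symm)⟩
    · rintro ⟨h, hlt⟩
      exact ⟨h, not_lt.2 hlt.le⟩
  have := Finset.card_filter_add_card_filter_not
    (s := Finset.univ.filter fun p : Fin n × Fin n => p.1 < p.2)
    (fun p => σ p.1 < σ p.2)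
  rw [h1, h2] at this
  exact this

lemma card_cell [Fintype F] (σ : Equiv.Perm (Fin n)) :
    Nat.card ↥({S : Set (Matrix (Fin n) (Fin n) F) |
        ∃ u : Matrix (Fin n) (Fin n) F, IsUnipUpper u ∧ S = cosetOf (u * permMat n F σ)})
      = Fintype.card F ^ lenPerm σ := by
  classical
  have horb := Nat.card_congr
    (MulAction.orbitProdStabilizerEquivGroup (UU n F) (cosetOf (permMat n F σ)))
  rw [Nat.card_prod] at horb
  rw [card_UU, card_stab σ] at horb
  rw [card_matSet _ (fun p hp => (Finset.mem_filter.1 hp).2),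
      card_matSet _ (fun p hp => (Finset.mem_filter.1 hp).2.1)] at horb
  rw [orbit_eq_cell σ] at horb
  have hsplit := filter_card_split σ
  set a := (Finset.univ.filter fun p : Fin n × Fin n => p.1 < p.2).card
  set b := (Finset.univ.filter fun p : Fin n × Fin n => p.1 < p.2 ∧ σ p.1 < σ p.2).card
  have hq : 0 < Fintype.card F := Fintype.card_pos
  have : Nat.card ↥({S : Set (Matrix (Fin n) (Fin n) F) |
        ∃ u : Matrix (Fin n) (Fin n) F, IsUnipUpper u ∧ S = cosetOf (u * permMat n F σ)})
      * Fintype.card F ^ b = Fintype.card F ^ lenPerm σ * Fintype.card F ^ b := by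
    rw [horb, ← pow_add, ← hsplit, add_comm]
  exact Nat.eq_of_mul_eq_mul_right (pow_pos hq b) this

end Part4

/-- One step of the Burnside process from the longest element samples the
Mallows measure: with `w₀(i) = n+1−i` the longest permutation, for every
`σ ∈ S_n` one has `Σ_{y ∈ C_σ} P(M_{w₀}·B, y) = q^{ℓ(σ)} / |G/B|`, where
`C_σ = {u·M_σ·B : u ∈ U} ⊆ G/B` is the Bruhat cell of `σ`. -/
theorem burnside_step_from_w0_is_mallows (q n : ℕ) (hn : 1 ≤ n) (F : Type*)
    [Field F] [Fintype F] (hF : Fintype.card F = q) (σ : Equiv.Perm (Fin n)) :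
    ∑ᶠ T ∈ {S : Set (Matrix (Fin n) (Fin n) F) |
        ∃ u : Matrix (Fin n) (Fin n) F, IsUnipUpper u ∧ S = cosetOf (u * permMat n F σ)},
      burnsideFlagKernel (cosetOf (permMat n F Fin.revPerm)) T =
      (q : ℝ) ^ lenPerm σ / (Nat.card ↥(flagSpace n F) : ℝ) := by
  classical
  set cell := {S : Set (Matrix (Fin n) (Fin n) F) |
        ∃ u : Matrix (Fin n) (Fin n) F, IsUnipUpper u ∧ S = cosetOf (u * permMat n F σ)}
  have hfin : cell.Finite := Set.toFinite _
  rw [finsum_mem_eq_finite_toFinset_sum _ hfin]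
  have hconst : ∀ T ∈ hfin.toFinset,
      burnsideFlagKernel (cosetOf (permMat n F Fin.revPerm)) T =
        (Nat.card ↥(flagSpace n F) : ℝ)⁻¹ := fun T _ => kernel_const T
  rw [Finset.sum_congr rfl hconst, Finset.sum_const, nsmul_eq_mul]
  have hcard : hfin.toFinset.card = Nat.card ↥cell := by
    rw [Nat.card_coe_set_eq, Set.ncard_eq_toFinset_card _ hfin]
  rw [hcard, card_cell σ, hF, div_eq_mul_inv]
  push_cast
  ring
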